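/- arXiv:1704.02099 — 8 statements merged into one kernel-verified Lean document; each statement's English description precedes it below -/
import Mathlib

section
/- Every finite hyperforest with at least one hyperedge contains a leaf, i.e., a hyperedge e such that at most one vertex of e is contained in any other hyperedge. -/
/-- A cycle of length `m ≥ 2`: distinct vertices `v i`, distinct hyperedges `e i`,
with `v i ∈ e i ∩ e (i+1 mod m)`. -/
def CycleOfLen {V : Type} (E : Set (Set V)) (m : ℕ) : Prop :=
  ∃ _hm : 2 ≤ m, ∃ v : Fin m → V, ∃ e : Fin m → Set V,
    Function.Injective v ∧ Function.Injective e ∧ (∀ i, e i ∈ E) ∧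
      ∀ i : Fin m, v i ∈ e i ∧ v i ∈ e ⟨((i : ℕ) + 1) % m, Nat.mod_lt _ (by omega)⟩

/-- every finite hyperforest with at least one hyperedge contains a
leaf: a hyperedge `e` such that at most one vertex of `e` lies in another hyperedge. -/
theorem stmt2 {V : Type} [Fintype V] (E : Set (Set V))
    (hne : ∀ e ∈ E, e.Nonempty) (hE : E.Nonempty)
    (hforest : ¬ ∃ m, CycleOfLen E m) :
    ∃ e ∈ E, ∃ u : V, ∀ v ∈ e, (∃ e' ∈ E, e' ≠ e ∧ v ∈ e') → v = u := by
  classical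
  by_contra hcon
  push_neg at hcon
  obtain ⟨e₀, he₀⟩ := hE
  obtain ⟨x₀, hx₀⟩ := hne e₀ he₀
  have key : ∀ n : ℕ, ∃ e : ℕ → Set V, ∃ v : ℕ → V,
      (∀ i, i ≤ n → e i ∈ E) ∧
      (∀ i j, i ≤ n → j ≤ n → e i = e j → i = j) ∧
      (∀ i j, i < n → j < n → v i = v j → i = j) ∧
      (∀ i, i < n → v i ∈ e i ∧ v i ∈ e (i+1)) := by
    intro n
    induction n with
    | zero =>
      refine ⟨fun _ => e₀, fun _ => x₀, fun _ _ => he₀, ?_, ?_, ?_⟩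
      · intro i j hi hj _; omega
      · intro i j hi; omega
      · intro i hi; omega
    | succ n ih =>
      obtain ⟨e, v, hmem, einj, vinj, hpath⟩ := ih
      have cyc : ∀ s, s < n → ∀ w : V, w ∈ e n → w ∈ e s →
          (∀ t, s ≤ t → t < n → w ≠ v t) → False := by
        intro s hs w hwn hws hfresh
        apply hforest
        refine ⟨n - s + 1, ⟨by omega,
          fun t => if (t : ℕ) = n - s then w else v (s + t),
          fun t => e (s + t), ?_, ?_, ?_, ?_⟩⟩
        · intro a b hab
          simp only at hab
          by_cases ha : (a : ℕ) = n - s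
          · by_cases hb : (b : ℕ) = n - s
            · exact Fin.ext (by omega)
            · rw [if_pos ha, if_neg hb] at hab
              exact absurd hab (hfresh (s + b) (by omega) (by have := b.isLt; omega))
          · by_cases hb : (b : ℕ) = n - s
            · rw [if_neg ha, if_pos hb] at hab
              exact absurd hab.symm (hfresh (s + a) (by omega) (by have := a.isLt; omega))
            · rw [if_neg ha, if_neg hb] at hab
              have := vinj (s + a) (s + b) (by have := a.isLt; omega)
                (by have := b.isLt; omega) hab
              exact Fin.ext (by omega)
        · intro a b hab
          simp only at hab
          have := einj (s + a) (s + b) (by have := a.isLt; omega)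
            (by have := b.isLt; omega) hab
          exact Fin.ext (by omega)
        · intro t; exact hmem (s + t) (by have := t.isLt; omega)
        · intro i
          by_cases hi : (i : ℕ) = n - s
          · constructor
            · show (if (i : ℕ) = n - s then w else v (s + i)) ∈ e (s + i)
              rw [if_pos hi, hi, show s + (n - s) = n by omega]
              exact hwn
            · show (if (i : ℕ) = n - s then w else v (s + i)) ∈
                e (s + (((i : ℕ) + 1) % (n - s + 1)))
              rw [if_pos hi]
              have h0 : ((i : ℕ) + 1) % (n - s + 1) = 0 := by
                rw [hi]; exact Nat.mod_self _
              rw [h0]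
              simpa using hws
          · have hi' : (i : ℕ) < n - s := by have := i.isLt; omega
            have hp := hpath (s + i) (by omega)
            constructor
            · show (if (i : ℕ) = n - s then w else v (s + i)) ∈ e (s + i)
              rw [if_neg hi]; exact hp.1
            · show (if (i : ℕ) = n - s then w else v (s + i)) ∈
                e (s + (((i : ℕ) + 1) % (n - s + 1)))
              rw [if_neg hi]
              have h1 : ((i : ℕ) + 1) % (n - s + 1) = (i : ℕ) + 1 :=
                Nat.mod_eq_of_lt (by omega)
              rw [h1, show s + ((i : ℕ) + 1) = s + i + 1 by omega]
              exact hp.2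
      obtain ⟨w, hwq, ⟨f, hfE, hfne, hwf⟩, hwne⟩ :=
        hcon (e n) (hmem n le_rfl) (v (n - 1))
      by_cases hwv : ∃ i, i < n ∧ w = v i
      · obtain ⟨i, hi, hwi⟩ := hwv
        have hin : i ≠ n - 1 := by
          intro h; exact hwne (by rw [hwi, h])
        refine ((cyc (i + 1) (by omega) w hwq (by rw [hwi]; exact (hpath i hi).2) ?_)).elim
        intro t ht1 ht2 hvv
        rw [hwi] at hvv
        have := vinj i t hi ht2 hvv
        omega
      · push_neg at hwv
        by_cases hfe : ∃ j, j ≤ n ∧ f = e j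
        · obtain ⟨j, hj, hfj⟩ := hfe
          have hjn : j ≠ n := fun h => hfne (by rw [hfj, h])
          exact (cyc j (by omega) w hwq (hfj ▸ hwf)
            (fun t _ ht2 => hwv t ht2)).elim
        · push_neg at hfe
          refine ⟨fun i => if i = n + 1 then f else e i,
            fun i => if i = n then w else v i, ?_, ?_, ?_, ?_⟩
          · intro i hi
            simp only []
            by_cases h : i = n + 1
            · rw [if_pos h]; exact hfE
            · rw [if_neg h]; exact hmem i (by omega)
          · intro i j hi hj hij
            simp only [] at hij
            by_cases h1 : i = n + 1 <;> by_cases h2 : j = n + 1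
            · omega
            · rw [if_pos h1, if_neg h2] at hij
              exact absurd hij (hfe j (by omega))
            · rw [if_neg h1, if_pos h2] at hij
              exact absurd hij (hfe i (by omega)).symm
            · rw [if_neg h1, if_neg h2] at hij
              exact einj i j (by omega) (by omega) hij
          · intro i j hi hj hij
            simp only [] at hij
            by_cases h1 : i = n <;> by_cases h2 : j = n
            · omega
            · rw [if_pos h1, if_neg h2] at hij
              exact absurd hij (hwv j (by omega))
            · rw [if_neg h1, if_pos h2] at hij
              exact absurd hij.symm (hwv i (by omega))
            · rw [if_neg h1, if_neg h2] at hij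
              exact vinj i j (by omega) (by omega) hij
          · intro i hi
            simp only []
            by_cases h : i = n
            · subst h
              rw [if_pos rfl, if_neg (show i ≠ i + 1 by omega),
                if_pos rfl]
              exact ⟨hwq, hwf⟩
            · rw [if_neg h, if_neg (show i ≠ n + 1 by omega),
                if_neg (show i + 1 ≠ n + 1 by omega)]
              exact hpath i (by omega)
  obtain ⟨e, v, hmem, einj, -, -⟩ := key (Fintype.card (Set V))
  have hinj : Function.Injective
      (fun t : Fin (Fintype.card (Set V) + 1) => e t) := by
    intro a b hab
    exact Fin.ext (einj a b (by have := a.isLt; omega) (by have := b.isLt; omega) hab)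
  have hle := Fintype.card_le_of_injective _ hinj
  simp only [Fintype.card_fin] at hle
  omega
end

section
/- Let k ≥ 3 and let E_k be the k-uniform hypergraph on k vertices with exactly one hyperedge (the whole vertex set). Then every finite k-uniform hyperforest F satisfies the separation conditions with respect to E_k: (SEP1) there is a homomorphism F → E_k; (SEP2) for distinct x,y in F there is a homomorphism F → E_k separating x and y; (SEP3) for every k-tuple of vertices of F that is not a hyperedge tuple, some homomorphism maps it to a non-hyperedge tuple of E_k. Consequently every finite k-uniform hyperforest embeds into a finite direct power of E_k. -/
/-- A homomorphism from the k-uniform hypergraph `(V,E)` to `E_k` (the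
k-uniform hypergraph with vertex set `Fin k` and one hyperedge): a map sending
each hyperedge-tuple to a tuple enumerating `Fin k` without repetition. -/
def IsHomToEk {V : Type} (k : ℕ) (E : Set (Set V)) (f : V → Fin k) : Prop :=
  ∀ t : Fin k → V, Set.range t ∈ E → Function.Bijective (f ∘ t)


lemma exists_extension {V : Type} [Fintype V] {k : ℕ} (hk : 0 < k)
    (S T : Set V) (hS : S.ncard = k) (hT : T ⊆ S) (φ : V → Fin k)
    (hφ : Set.InjOn φ T) :
    ∃ g : V → Fin k, Set.InjOn g S ∧ g '' S = Set.univ ∧ ∀ v ∈ T, g v = φ v := by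
  classical
  have hSf : S.Finite := Set.toFinite S
  have hTf : T.Finite := Set.toFinite T
  set S' := hSf.toFinset with hS'
  set T' := hTf.toFinset with hT'
  have hTS' : T' ⊆ S' := by
    intro v hv
    simp only [hS', hT', Set.Finite.mem_toFinset] at *
    exact hT hv
  set A : Finset V := S' \ T' with hA
  set B : Finset (Fin k) := Finset.univ \ T'.image φ with hB
  have hφ' : Set.InjOn φ ↑T' := by rwa [hT', Set.Finite.coe_toFinset]
  have hS'card : S'.card = k := by rw [hS', ← Set.ncard_eq_toFinset_card _ hSf, hS]
  have hcard : A.card = B.card := by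
    rw [hA, hB, Finset.card_sdiff_of_subset hTS', Finset.card_sdiff_of_subset (Finset.subset_univ _),
      Finset.card_image_of_injOn hφ', Finset.card_univ, Fintype.card_fin, hS'card]
  set eqv := Finset.equivOfCardEq hcard with heqv
  set g : V → Fin k := fun v =>
    if hv : v ∈ T' then φ v else if hv2 : v ∈ A then (eqv ⟨v, hv2⟩ : Fin k) else ⟨0, hk⟩
    with hg
  have hgT : ∀ v ∈ T, g v = φ v := by
    intro v hv
    have : v ∈ T' := hTf.mem_toFinset.2 hv
    simp [hg, this]
  have hmemA : ∀ v ∈ S, v ∉ T' → v ∈ A := by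
    intro v hv hv'
    simp only [hA, Finset.mem_sdiff, hS', Set.Finite.mem_toFinset]
    exact ⟨hv, hv'⟩
  have hgB : ∀ (v : V) (hv : v ∈ A), g v ∈ B := by
    intro v hv
    have hv' : v ∉ T' := by
      intro h; exact absurd hv (by simp [hA, h])
    simp only [hg, dif_neg hv', dif_pos hv]
    exact (eqv ⟨v, hv⟩).2
  have hinj : Set.InjOn g S := by
    intro u hu v hv heq
    by_cases hu' : u ∈ T' <;> by_cases hv' : v ∈ T'
    · apply hφ (by rwa [← hTf.mem_toFinset]) (by rwa [← hTf.mem_toFinset])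
      rwa [← hgT u (by rwa [← hTf.mem_toFinset]), ← hgT v (by rwa [← hTf.mem_toFinset])]
    · exfalso
      have h1 : g v ∈ B := hgB v (hmemA v hv hv')
      have h2 : g u ∈ T'.image φ := Finset.mem_image.2 ⟨u, hu', (hgT u (by rwa [← hTf.mem_toFinset])).symm⟩
      rw [heq] at h2
      rw [hB, Finset.mem_sdiff] at h1
      exact h1.2 h2
    · exfalso
      have h1 : g u ∈ B := hgB u (hmemA u hu hu')
      have h2 : g v ∈ T'.image φ := Finset.mem_image.2 ⟨v, hv', (hgT v (by rwa [← hTf.mem_toFinset])).symm⟩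
      rw [← heq] at h2
      rw [hB, Finset.mem_sdiff] at h1
      exact h1.2 h2
    · have hu2 := hmemA u hu hu'
      have hv2 := hmemA v hv hv'
      simp only [hg, dif_neg hu', dif_pos hu2, dif_neg hv', dif_pos hv2] at heq
      have := eqv.injective (Subtype.ext heq)
      exact congrArg Subtype.val this
  refine ⟨g, hinj, ?_, hgT⟩
  apply Set.eq_of_subset_of_ncard_le (Set.subset_univ _)
  rw [Set.ncard_univ, Nat.card_eq_fintype_card, Fintype.card_fin,
    Set.ncard_image_of_injOn hinj, hS]



lemma two_cycle {V : Type} {E : Set (Set V)} {e f : Set V} {x y : V}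
    (he : e ∈ E) (hf : f ∈ E) (hef : e ≠ f) (hxy : x ≠ y)
    (hxe : x ∈ e) (hye : y ∈ e) (hxf : x ∈ f) (hyf : y ∈ f) :
    CycleOfLen E 2 := by
  refine ⟨le_refl 2, ![x, y], ![e, f], ?_, ?_, ?_, ?_⟩
  · intro i j hij
    fin_cases i <;> fin_cases j <;> simp_all
  · intro i j hij
    fin_cases i <;> fin_cases j <;> simp_all
  · intro i; fin_cases i <;> simpa
  · intro i; fin_cases i <;> simp <;> first | exact ⟨hxe, hxf⟩ | exact ⟨hyf, hye⟩


lemma three_cycle {V : Type} {E : Set (Set V)} {e f g : Set V} {x y z : V}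
    (he : e ∈ E) (hf : f ∈ E) (hg : g ∈ E)
    (hef : e ≠ f) (hfg : f ≠ g) (heg : e ≠ g)
    (hxy : x ≠ y) (hyz : y ≠ z) (hxz : x ≠ z)
    (hx : x ∈ e ∧ x ∈ f) (hy : y ∈ f ∧ y ∈ g) (hz : z ∈ g ∧ z ∈ e) :
    CycleOfLen E 3 := by
  refine ⟨by norm_num, ![x, y, z], ![e, f, g], ?_, ?_, ?_, ?_⟩
  · intro i j hij
    fin_cases i <;> fin_cases j <;> simp_all
  · intro i j hij
    fin_cases i <;> fin_cases j <;> simp_all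
  · intro i; fin_cases i <;> simpa
  · intro i; fin_cases i <;> simp <;>
      first | exact hx | exact hy | exact hz


/-- In a finite acyclic hypergraph with nonempty edges, there is an edge `e`
and a vertex `z ∈ e` such that `e` meets every other edge only in `z`. -/
lemma exists_leaf {V : Type} [Fintype V] {E : Set (Set V)}
    (hne : E.Nonempty) (hEne : ∀ e ∈ E, e.Nonempty)
    (hforest : ¬ ∃ m, CycleOfLen E m) :
    ∃ e ∈ E, ∃ z ∈ e, ∀ e' ∈ E, e' ≠ e → ∀ w ∈ e', w ∈ e → w = z := by
  classical
  -- paths of length n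
  set P : ℕ → Prop := fun n => ∃ (e : ℕ → Set V) (v : ℕ → V),
    (∀ i ≤ n, e i ∈ E) ∧ Set.InjOn e {i | i ≤ n} ∧
    Set.InjOn v {i | 1 ≤ i ∧ i ≤ n} ∧
    (∀ i, 1 ≤ i → i ≤ n → v i ∈ e (i - 1) ∧ v i ∈ e i) with hP
  obtain ⟨e0, he0⟩ := hne
  obtain ⟨x0, hx0⟩ := hEne e0 he0
  have hP0 : P 0 := by
    refine ⟨fun _ => e0, fun _ => x0, fun i _ => he0, ?_, ?_, ?_⟩
    · intro i hi j hj _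
      simp only [Set.mem_setOf_eq, Nat.le_zero] at hi hj
      omega
    · intro i hi j hj _
      simp only [Set.mem_setOf_eq] at hi hj
      omega
    · intro i h1 h2; omega
  have hbound : ∀ n, P n → n + 1 ≤ Fintype.card (Set V) := by
    intro n hn
    obtain ⟨e, v, he, hinj, _, _⟩ := hn
    have : Function.Injective (fun i : Fin (n + 1) => e i) := by
      intro i j hij
      have := hinj (by simpa using Nat.lt_succ_iff.mp i.2) (by simpa using Nat.lt_succ_iff.mp j.2) hij
      exact Fin.ext this
    simpa using Fintype.card_le_of_injective _ this
  -- maximal path length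
  have hmax : ∃ N, P N ∧ ¬ P (N + 1) := by
    by_contra h
    push_neg at h
    have hall : ∀ n, P n := by
      intro n
      induction n with
      | zero => exact hP0
      | succ n ih => exact h n ih
    have := hbound (Fintype.card (Set V)) (hall _)
    omega
  obtain ⟨N, ⟨e, v, heE, heinj, hvinj, hev⟩, hnosucc⟩ := hmax
  -- apply the negation of the goal to the last edge
  by_contra hno
  push_neg at hno
  -- last vertex
  have hzN : ∃ z, z ∈ e N ∧ (1 ≤ N → z = v N) := by
    rcases Nat.eq_zero_or_pos N with h | h
    · obtain ⟨z, hz⟩ := hEne (e N) (heE N le_rfl)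
      exact ⟨z, hz, by omega⟩
    · exact ⟨v N, (hev N h le_rfl).2, fun _ => rfl⟩
  obtain ⟨z, hzE, hzv⟩ := hzN
  obtain ⟨f, hfE, hfne, w, hwf, hweN, hwz⟩ := hno (e N) (heE N le_rfl) z hzE
  -- the extension must fail
  have hdich : (∃ j ≤ N, f = e j) ∨ (∃ i, 1 ≤ i ∧ i ≤ N ∧ w = v i) := by
    by_contra hc
    push_neg at hc
    obtain ⟨hc1, hc2⟩ := hc
    apply hnosucc
    refine ⟨fun i => if i ≤ N then e i else f, fun i => if i ≤ N then v i else w,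
      ?_, ?_, ?_, ?_⟩
    · intro i _
      by_cases hi : i ≤ N <;> simp [hi, heE, hfE]
    · intro i hi j hj hij
      simp only [Set.mem_setOf_eq] at hi hj
      by_cases hi' : i ≤ N <;> by_cases hj' : j ≤ N <;> simp only [hi', hj', if_pos, if_neg, if_true, if_false] at hij
      · exact heinj hi' hj' hij
      · exact absurd hij.symm (hc1 i hi')
      · exact absurd hij (hc1 j hj')
      · omega
    · intro i hi j hj hij
      simp only [Set.mem_setOf_eq] at hi hj
      by_cases hi' : i ≤ N <;> by_cases hj' : j ≤ N <;> simp only [hi', hj', if_pos, if_neg, if_true, if_false] at hij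
      · exact hvinj ⟨hi.1, hi'⟩ ⟨hj.1, hj'⟩ hij
      · exact absurd hij.symm (hc2 i hi.1 hi')
      · exact absurd hij (hc2 j hj.1 hj')
      · omega
    · intro i h1 h2
      by_cases hi : i ≤ N
      · have : i - 1 ≤ N := by omega
        simp only [hi, this, if_true, if_pos]
        exact hev i h1 hi
      · have hiN : i = N + 1 := by omega
        have h1' : ¬ (i ≤ N) := hi
        have h2' : i - 1 ≤ N := by omega
        simp only [h1', h2', if_neg, if_pos, if_true, if_false, not_false_iff]
        subst hiN
        simpa using ⟨hweN, hwf⟩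
  -- in either case, N ≥ 1 and w belongs to some earlier edge
  have hkey : 1 ≤ N ∧ ∃ j < N, w ∈ e j := by
    rcases hdich with ⟨j, hjN, hfj⟩ | ⟨i, hi1, hiN, hwv⟩
    · have hjN' : j < N := by
        rcases lt_or_eq_of_le hjN with h | h
        · exact h
        · exact absurd (h ▸ hfj) hfne
      exact ⟨by omega, j, hjN', hfj ▸ hwf⟩
    · have hN1 : 1 ≤ N := le_trans hi1 hiN
      have hiN' : i < N := by
        rcases lt_or_eq_of_le hiN with h | h
        · exact h
        · exfalso
          apply hwz
          rw [hwv, h, hzv hN1]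
      exact ⟨hN1, i, hiN', hwv ▸ (hev i hi1 hiN).2⟩
  obtain ⟨hN1, j0, hj0N, hwj0⟩ := hkey
  have hzvN : z = v N := hzv hN1
  -- largest j < N with w ∈ e j
  set Q : ℕ → Prop := fun i => w ∈ e i with hQ
  set j := Nat.findGreatest Q (N - 1) with hj
  have hQj : Q j := Nat.findGreatest_spec (m := j0) (by omega) hwj0
  have hjle : j ≤ N - 1 := Nat.findGreatest_le _
  have hjmax : ∀ i, j < i → i ≤ N - 1 → ¬ Q i :=
    fun i h1 h2 => Nat.findGreatest_is_greatest h1 h2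
  -- build a cycle of length m
  set m := N - j + 1 with hm
  have hm2 : 2 ≤ m := by omega
  apply hforest
  refine ⟨m, hm2, fun i => if (i : ℕ) = m - 1 then w else v (j + i + 1),
    fun i => e (j + i), ?_, ?_, ?_, ?_⟩
  · -- vertices injective
    intro i i' hii
    have hi2 := i.2
    have hi2' := i'.2
    by_cases h1 : (i : ℕ) = m - 1 <;> by_cases h2 : (i' : ℕ) = m - 1 <;>
      simp only [h1, h2, if_true, if_false, if_pos, if_neg] at hii
    · exact Fin.ext (h1.trans h2.symm)
    · exfalso
      have hle : j + (i' : ℕ) + 1 ≤ N := by omega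
      rcases lt_or_eq_of_le hle with h | h
      · exact hjmax _ (by omega) (by omega) (hii ▸ (hev _ (by omega) (by omega)).2)
      · rw [h] at hii; rw [hzvN] at hwz; exact hwz hii
    · exfalso
      have hle : j + (i : ℕ) + 1 ≤ N := by omega
      rcases lt_or_eq_of_le hle with h | h
      · exact hjmax _ (by omega) (by omega) (hii ▸ (hev _ (by omega) (by omega)).2)
      · rw [h] at hii; rw [hzvN] at hwz; exact hwz hii.symm
    · have := @hvinj (j + i + 1) ⟨by omega, by omega⟩ (j + i' + 1) ⟨by omega, by omega⟩ hii
      exact Fin.ext (by omega)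
  · -- edges injective
    intro i i' hii
    have := @heinj (j + i) (by simp only [Set.mem_setOf_eq]; omega) (j + i')
      (by simp only [Set.mem_setOf_eq]; omega) hii
    exact Fin.ext (by omega)
  · intro i
    exact heE _ (by have := i.2; omega)
  · intro i
    have hi2 := i.2
    by_cases h1 : (i : ℕ) = m - 1
    · have hnext : ((i : ℕ) + 1) % m = 0 := by
        rw [show (i : ℕ) + 1 = m by omega, Nat.mod_self]
      simp only [h1, if_pos, if_true, hnext]
      constructor
      · have harr : j + (m - 1) = N := by omega
        rw [harr]
        exact hweN
      · rw [show (m - 1 + 1) % m = 0 by rw [show m - 1 + 1 = m by omega, Nat.mod_self], Nat.add_zero]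
        exact hQj
    · have hnext : ((i : ℕ) + 1) % m = (i : ℕ) + 1 := Nat.mod_eq_of_lt (by omega)
      simp only [h1, if_neg, if_false, hnext, not_false_iff]
      constructor
      · have := (hev (j + i + 1) (by omega) (by omega)).1
        simpa using this
      · have := (hev (j + i + 1) (by omega) (by omega)).2
        have harr : j + ((i : ℕ) + 1) = j + (i : ℕ) + 1 := by omega
        rw [harr]
        exact this


lemma exists_third {k : ℕ} (hk : 3 ≤ k) (a b : Fin k) : ∃ c : Fin k, c ≠ a ∧ c ≠ b := by
  by_contra h
  push_neg at h
  have hsub : (Finset.univ : Finset (Fin k)) ⊆ {a, b} := by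
    intro c _
    rcases em (c = a) with rfl | hca
    · simp
    · simp [h c hca]
  have h1 := Finset.card_le_card hsub
  have h2 : ({a, b} : Finset (Fin k)).card ≤ 2 :=
    le_trans (Finset.card_insert_le _ _) (by simp)
  simp [Finset.card_univ] at h1
  omega


lemma glue {V : Type} {k : ℕ} {E : Set (Set V)} {e : Set V} [DecidablePred (· ∈ e)] {z : V}
    {f' : V → Fin k} {g : V → Fin k}
    (hleaf : ∀ e' ∈ E, e' ≠ e → ∀ w ∈ e', w ∈ e → w = z)
    (hf' : IsHomToEk k (E \ {e}) f')
    (hg2 : g '' e = Set.univ) (hgz : g z = f' z) :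
    IsHomToEk k E (fun v => if v ∈ e then g v else f' v) := by
  intro t ht
  by_cases hte : Set.range t = e
  · rw [← Finite.surjective_iff_bijective]
    intro c
    have : c ∈ g '' e := by rw [hg2]; trivial
    obtain ⟨w, hw, hwc⟩ := this
    rw [← hte] at hw
    obtain ⟨i, rfl⟩ := hw
    refine ⟨i, ?_⟩
    have hti : t i ∈ e := by rw [← hte]; exact ⟨i, rfl⟩
    simp [hti, hwc]
  · have heq : ∀ i, (if t i ∈ e then g (t i) else f' (t i)) = f' (t i) := by
      intro i
      by_cases hti : t i ∈ e
      · have : t i = z := hleaf (Set.range t) ht hte (t i) ⟨i, rfl⟩ hti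
        rw [if_pos hti, this, hgz]
      · rw [if_neg hti]
    have : (fun v => if v ∈ e then g v else f' v) ∘ t = f' ∘ t := by
      funext i
      exact heq i
    rw [this]
    exact hf' t ⟨ht, hte⟩


lemma main_lemma {V : Type} [Fintype V] {k : ℕ} (hk : 3 ≤ k) :
    ∀ (n : ℕ) (E : Set (Set V)), E.ncard = n → (∀ e ∈ E, e.ncard = k) →
      (¬ ∃ m, CycleOfLen E m) →
      ∀ (x y : V) (a b : Fin k), (x = y → a = b) →
        (x ≠ y → a ≠ b ∨ ¬ ∃ e ∈ E, x ∈ e ∧ y ∈ e) →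
        ∃ f : V → Fin k, IsHomToEk k E f ∧ f x = a ∧ f y = b := by
  intro n
  induction n using Nat.strong_induction_on with
  | _ n ih =>
  intro E hn huni hfor x y a b h1 h2
  classical
  rcases Nat.eq_zero_or_pos n with hn0 | hn0
  · -- E is empty
    subst hn0
    have hE : E = ∅ := (Set.ncard_eq_zero (Set.toFinite E)).1 hn
    refine ⟨fun v => if v = x then a else if v = y then b else ⟨0, by omega⟩, ?_, ?_, ?_⟩
    · intro t ht; rw [hE] at ht; exact absurd ht (Set.notMem_empty _)
    · simp
    · by_cases hxy : y = x
      · subst hxy; simp [(h1 rfl).symm]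
      · simp [hxy]
  · -- E is nonempty
    have hEne : E.Nonempty := Set.nonempty_of_ncard_ne_zero (by omega)
    have hive : ∀ e ∈ E, e.Nonempty := fun e he =>
      Set.nonempty_of_ncard_ne_zero (by rw [huni e he]; omega)
    obtain ⟨e, heE, z, hze, hleaf⟩ := exists_leaf hEne hive hfor
    set E' := E \ {e} with hE'
    have hn' : E'.ncard = n - 1 := by
      rw [hE', Set.ncard_diff_singleton_of_mem heE, hn]
    have huni' : ∀ e' ∈ E', e'.ncard = k := fun e' he' => huni e' he'.1
    have hfor' : ¬ ∃ m, CycleOfLen E' m := by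
      rintro ⟨m, hm, v, ee, i1, i2, i3, i4⟩
      exact hfor ⟨m, hm, v, ee, i1, i2, fun i => (i3 i).1, i4⟩
    obtain ⟨c3, hc3a, hc3b⟩ := exists_third hk a b
    set c : Fin k := if x = z then a else if y = z then b else c3 with hc
    have hab : x ∈ e → y ∈ e → x ≠ y → a ≠ b := by
      intro hx hy hxy
      rcases h2 hxy with h | h
      · exact h
      · exact absurd ⟨e, heE, hx, hy⟩ h
    have hca : x ∈ e → x ≠ z → c ≠ a := by
      intro hx hxz
      rw [hc, if_neg hxz]
      by_cases hyz : y = z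
      · rw [if_pos hyz]
        exact (hab hx (by rw [hyz]; exact hze) (fun h => hxz (h.trans hyz))).symm
      · rw [if_neg hyz]; exact hc3a
    have hcb : y ∈ e → y ≠ z → x ≠ y → c ≠ b := by
      intro hy hyz hxy
      rw [hc]
      by_cases hxz : x = z
      · rw [if_pos hxz]
        exact hab (by rw [hxz]; exact hze) hy hxy
      · rw [if_neg hxz, if_neg hyz]; exact hc3b
    set x' := if x ∈ e then z else x with hx'
    set y' := if y ∈ e then z else y with hy'
    set a' := if x ∈ e then c else a with ha'
    set b' := if y ∈ e then c else b with hb'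
    have hih1 : x' = y' → a' = b' := by
      by_cases hx : x ∈ e <;> by_cases hy : y ∈ e <;>
        simp only [hx', hy', ha', hb', hx, hy, if_true, if_false]
      · exact fun _ => trivial
      · intro h; exact absurd (show y ∈ e by rw [← h]; exact hze) hy
      · intro h; exact absurd (show x ∈ e by rw [h]; exact hze) hx
      · exact h1
    have hih2 : x' ≠ y' → a' ≠ b' ∨ ¬ ∃ e' ∈ E', x' ∈ e' ∧ y' ∈ e' := by
      by_cases hx : x ∈ e <;> by_cases hy : y ∈ e <;>
        simp only [hx', hy', ha', hb', hx, hy, if_true, if_false]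
      · intro h; exact absurd rfl h
      · intro hzy
        by_cases hxz : x = z
        · by_cases hab' : a = b
          · right
            have hxy : x ≠ y := fun h => hy (by rw [← h]; exact hx)
            rcases h2 hxy with h | h
            · exact absurd hab' h
            · rintro ⟨e', he', hz', hy2⟩
              exact h ⟨e', he'.1, by rw [hxz]; exact hz', hy2⟩
          · left; rw [hc, if_pos hxz]; exact hab'
        · left
          have hyz : ¬ (y = z) := fun h => hy (by rw [h]; exact hze)
          rw [hc, if_neg hxz, if_neg hyz]
          exact hc3b
      · intro hxz
        by_cases hyz : y = z
        · have hcb' : c = b := by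
            rw [hc, if_neg hxz, if_pos hyz]
          rw [hcb']
          have hxy : x ≠ y := fun h => hxz (h.trans hyz)
          rcases h2 hxy with h | h
          · left; exact h
          · right
            rintro ⟨e', he', hx2, hz'⟩
            exact h ⟨e', he'.1, hx2, by rw [hyz]; exact hz'⟩
        · left
          rw [hc, if_neg hxz, if_neg hyz]
          exact fun h => hc3a h.symm
      · intro hxy
        rcases h2 hxy with h | h
        · left; exact h
        · right
          rintro ⟨e', he', hx2, hy2⟩
          exact h ⟨e', he'.1, hx2, hy2⟩
    obtain ⟨f', hf', hf'x, hf'y⟩ :=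
      ih (n - 1) (by omega) E' hn' huni' hfor' x' y' a' b' hih1 hih2
    have hfz : (x ∈ e ∨ y ∈ e) → f' z = c := by
      rintro (hx | hy)
      · have e1 : x' = z := by rw [hx', if_pos hx]
        have e2 : a' = c := by rw [ha', if_pos hx]
        rw [← e1, ← e2]; exact hf'x
      · have e1 : y' = z := by rw [hy', if_pos hy]
        have e2 : b' = c := by rw [hb', if_pos hy]
        rw [← e1, ← e2]; exact hf'y
    set T : Set V := {v | v = z ∨ (v = x ∧ x ∈ e) ∨ (v = y ∧ y ∈ e)} with hT
    set φ : V → Fin k := fun v => if v = z then f' z else if v = x then a else b with hφ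
    have hTe : T ⊆ e := by
      rintro v (rfl | ⟨rfl, h⟩ | ⟨rfl, h⟩)
      exacts [hze, h, h]
    have hφz : φ z = f' z := by rw [hφ]; simp
    have hφx : x ≠ z → φ x = a := by
      intro h; rw [hφ]; simp [h]
    have hφy : y ≠ z → y ≠ x → φ y = b := by
      intro h h'; rw [hφ]; simp [h, h']
    have hφyx : y = x → y ≠ z → φ y = a := by
      intro h h'
      rw [hφ]
      show (if y = z then f' z else if y = x then a else b) = a
      rw [if_neg h', if_pos h]
    have hφinj : Set.InjOn φ T := by
      have key : ∀ u ∈ T, ∀ v ∈ T, u ≠ v → φ u ≠ φ v := by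
        have kzx : x ∈ e → z ≠ x → φ z ≠ φ x := by
          intro hx hzx
          rw [hφz, hφx (fun h => hzx h.symm), hfz (Or.inl hx)]
          exact hca hx (fun h => hzx h.symm)
        have kzy : y ∈ e → z ≠ y → φ z ≠ φ y := by
          intro hy hzy
          by_cases hyx : y = x
          · rw [hφz, hφyx hyx (fun h => hzy h.symm), hfz (Or.inl (by rw [← hyx]; exact hy))]
            exact hca (by rw [← hyx]; exact hy) (by rw [← hyx]; exact (fun h => hzy h.symm))
          · rw [hφz, hφy (fun h => hzy h.symm) hyx, hfz (Or.inr hy)]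
            exact hcb hy (fun h => hzy h.symm) (fun h => hyx h.symm)
        have kxy : x ∈ e → y ∈ e → x ≠ y → φ x ≠ φ y := by
          intro hx hy hxy
          have hone := hab hx hy hxy
          by_cases hxz : x = z
          · have hyz : y ≠ z := fun h => hxy (hxz.trans h.symm)
            rw [show φ x = φ z by rw [hxz], hφz, hφy hyz (fun h => hxy h.symm),
              hfz (Or.inl hx), hc, if_pos hxz]
            exact hone
          · rw [hφx hxz]
            by_cases hyz : y = z
            · rw [show φ y = φ z by rw [hyz], hφz, hfz (Or.inl hx)]
              exact fun h => (hca hx hxz) h.symm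
            · rw [hφy hyz (fun h => hxy h.symm)]
              exact hone
        rintro u (rfl | ⟨rfl, hux⟩ | ⟨rfl, huy⟩) v (rfl | ⟨rfl, hvx⟩ | ⟨rfl, hvy⟩) huv
        · exact absurd rfl huv
        · exact kzx hvx huv
        · exact kzy hvy huv
        · exact fun h => (kzx hux huv.symm) h.symm
        · exact absurd rfl huv
        · exact kxy hux hvy huv
        · exact fun h => (kzy huy huv.symm) h.symm
        · exact fun h => (kxy hvx huy huv.symm) h.symm
        · exact absurd rfl huv
      intro u hu v hv heq
      by_contra hne
      exact key u hu v hv hne heq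
    obtain ⟨g, hg1, hg2, hgT⟩ :=
      exists_extension (by omega) e T (huni e heE) hTe φ hφinj
    have hgz : g z = f' z := by rw [hgT z (Or.inl rfl), hφz]
    refine ⟨fun v => if v ∈ e then g v else f' v, glue hleaf hf' hg2 hgz, ?_, ?_⟩
    · by_cases hx : x ∈ e
      · simp only [if_pos hx]
        rw [hgT x (Or.inr (Or.inl ⟨rfl, hx⟩))]
        by_cases hxz : x = z
        · rw [show φ x = φ z by rw [hxz], hφz, hfz (Or.inl hx), hc, if_pos hxz]
        · exact hφx hxz
      · simp only [if_neg hx]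
        have e1 : x' = x := by rw [hx', if_neg hx]
        have e2 : a' = a := by rw [ha', if_neg hx]
        rw [← e1, ← e2]; exact hf'x
    · by_cases hy : y ∈ e
      · simp only [if_pos hy]
        rw [hgT y (Or.inr (Or.inr ⟨rfl, hy⟩))]
        by_cases hyz : y = z
        · rw [show φ y = φ z by rw [hyz], hφz, hfz (Or.inr hy), hc]
          by_cases hxz : x = z
          · rw [if_pos hxz]
            exact h1 (hxz.trans hyz.symm)
          · rw [if_neg hxz, if_pos hyz]
        · by_cases hyx : y = x
          · rw [hφyx hyx hyz]
            exact h1 hyx.symm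
          · exact hφy hyz hyx
      · simp only [if_neg hy]
        have e1 : y' = y := by rw [hy', if_neg hy]
        have e2 : b' = b := by rw [hb', if_neg hy]
        rw [← e1, ← e2]; exact hf'y


/-- for `k ≥ 3`, every finite k-uniform hyperforest satisfies
(SEP1)–(SEP3) with respect to `E_k`, and consequently embeds in a finite
direct power of `E_k`. -/
theorem stmt3 {V : Type} [Fintype V] (k : ℕ) (hk : 3 ≤ k) (E : Set (Set V))
    (huniform : ∀ e ∈ E, e.ncard = k)
    (hforest : ¬ ∃ m, CycleOfLen E m) :
    (∃ f : V → Fin k, IsHomToEk k E f) ∧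
    (∀ x y : V, x ≠ y → ∃ f : V → Fin k, IsHomToEk k E f ∧ f x ≠ f y) ∧
    (∀ t : Fin k → V, Set.range t ∉ E →
      ∃ f : V → Fin k, IsHomToEk k E f ∧ ¬ Function.Bijective (f ∘ t)) ∧
    (∃ (I : Type) (_ : Finite I) (g : V → I → Fin k), Function.Injective g ∧
      ∀ t : Fin k → V, Set.range t ∈ E ↔ ∀ i : I, Function.Bijective fun j => g (t j) i) := by
  classical
  have M : ∀ (x y : V) (a b : Fin k), (x = y → a = b) →
      (x ≠ y → a ≠ b ∨ ¬ ∃ e ∈ E, x ∈ e ∧ y ∈ e) →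
      ∃ f : V → Fin k, IsHomToEk k E f ∧ f x = a ∧ f y = b :=
    fun x y a b h1 h2 => main_lemma hk E.ncard E rfl huniform hforest x y a b h1 h2
  have sep1 : ∃ f : V → Fin k, IsHomToEk k E f := by
    by_cases hV : Nonempty V
    · obtain ⟨x0⟩ := hV
      obtain ⟨f, hf, -, -⟩ := M x0 x0 ⟨0, by omega⟩ ⟨0, by omega⟩ (fun _ => rfl)
        (fun h => absurd rfl h)
      exact ⟨f, hf⟩
    · haveI := not_nonempty_iff.1 hV
      exact ⟨fun v => isEmptyElim v, fun t _ => isEmptyElim (t ⟨0, by omega⟩)⟩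
  have sep2 : ∀ x y : V, x ≠ y → ∃ f : V → Fin k, IsHomToEk k E f ∧ f x ≠ f y := by
    intro x y hxy
    obtain ⟨f, hf, hfx, hfy⟩ := M x y ⟨0, by omega⟩ ⟨1, by omega⟩
      (fun h => absurd h hxy)
      (fun _ => Or.inl (by intro h; simp only [Fin.mk.injEq] at h; omega))
    refine ⟨f, hf, ?_⟩
    rw [hfx, hfy]
    intro h; simp only [Fin.mk.injEq] at h; omega
  have sep3 : ∀ t : Fin k → V, Set.range t ∉ E →
      ∃ f : V → Fin k, IsHomToEk k E f ∧ ¬ Function.Bijective (f ∘ t) := by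
    intro t ht
    by_cases hinj : Function.Injective t
    · -- find a pair of coordinates not sharing an edge
      have hpair : ∃ i j : Fin k, i ≠ j ∧ ¬ ∃ e ∈ E, t i ∈ e ∧ t j ∈ e := by
        by_contra hcon
        push_neg at hcon
        set i0 : Fin k := ⟨0, by omega⟩
        set i1 : Fin k := ⟨1, by omega⟩
        have hi01 : i0 ≠ i1 := by intro h; simp only [i0, i1, Fin.mk.injEq] at h; omega
        obtain ⟨e, heE, h0e, h1e⟩ := hcon i0 i1 hi01
        by_cases hall : ∀ i, t i ∈ e
        · apply ht
          have hsub : Set.range t ⊆ e := by rintro _ ⟨i, rfl⟩; exact hall i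
          have hcard : e.ncard ≤ (Set.range t).ncard := by
            rw [← Set.image_univ, Set.ncard_image_of_injective _ hinj,
              Set.ncard_univ, Nat.card_eq_fintype_card, Fintype.card_fin,
              huniform e heE]
          have : Set.range t = e :=
            Set.eq_of_subset_of_ncard_le hsub hcard (Set.toFinite e)
          rw [this]
          exact heE
        · push_neg at hall
          obtain ⟨i, hie⟩ := hall
          have hi0 : i0 ≠ i := fun h => hie (by rw [← h]; exact h0e)
          have hi1 : i1 ≠ i := fun h => hie (by rw [← h]; exact h1e)
          obtain ⟨f0, hf0E, h00, h0i⟩ := hcon i0 i hi0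
          obtain ⟨f1, hf1E, h11, h1i⟩ := hcon i1 i hi1
          have hf0e : f0 ≠ e := fun h => hie (h ▸ h0i)
          have hf1e : f1 ≠ e := fun h => hie (h ▸ h1i)
          have hf01 : f0 ≠ f1 := by
            intro h
            exact hforest ⟨2, two_cycle heE hf0E (Ne.symm hf0e)
              (hinj.ne hi01) h0e h1e h00 (h ▸ h11)⟩
          exact hforest ⟨3, three_cycle heE hf0E hf1E (Ne.symm hf0e) hf01
            (Ne.symm hf1e) (hinj.ne hi0) (hinj.ne (Ne.symm hi1)) (hinj.ne hi01)
            ⟨h0e, h00⟩ ⟨h0i, h1i⟩ ⟨h11, h1e⟩⟩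
      obtain ⟨i, j, hij, hnc⟩ := hpair
      obtain ⟨f, hf, hfx, hfy⟩ := M (t i) (t j) ⟨0, by omega⟩ ⟨0, by omega⟩
        (fun _ => rfl) (fun _ => Or.inr hnc)
      refine ⟨f, hf, fun hbij => ?_⟩
      have : (f ∘ t) i = (f ∘ t) j := by
        simp only [Function.comp_apply, hfx, hfy]
      exact hij (hbij.injective this)
    · obtain ⟨f, hf⟩ := sep1
      refine ⟨f, hf, fun hbij => ?_⟩
      rw [Function.not_injective_iff] at hinj
      obtain ⟨u, v, huv, hne⟩ := hinj
      apply hne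
      apply hbij.injective
      simp only [Function.comp_apply, huv]
  refine ⟨sep1, sep2, sep3, ?_⟩
  refine ⟨{f : V → Fin k // IsHomToEk k E f}, inferInstance, fun v i => i.1 v, ?_, ?_⟩
  · intro u v huv
    by_contra hne
    obtain ⟨f, hf, hfne⟩ := sep2 u v hne
    exact hfne (congrFun huv ⟨f, hf⟩)
  · intro t
    constructor
    · intro ht i
      exact i.2 t ht
    · intro hall
      by_contra hnt
      obtain ⟨f, hf, hnb⟩ := sep3 t hnt
      exact hnb (hall ⟨f, hf⟩)
end

section
/- Let k > ℓ > 1 and let E be the hypergraph on ℓ vertices with exactly one hyperedge (the whole vertex set), treated as a k-hypergraph structure (so its relation consists of all k-tuples whose coordinate set is the full vertex set). Then the k-uniform hypergraph E_k on k vertices with exactly one hyperedge lies in SP(E); equivalently, E_k satisfies the separation conditions (SEP1)–(SEP3) with respect to E. -/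
/-- for `k > ℓ > 1`, the k-uniform single-hyperedge hypergraph `E_k`
(on `Fin k`, relation = tuples enumerating `Fin k` without repetition, i.e.
bijections) satisfies (SEP1)–(SEP3) with respect to the single-hyperedge
hypergraph `E` on `Fin ℓ` viewed as a k-hypergraph structure (relation = all
k-tuples whose coordinate set is all of `Fin ℓ`, i.e. surjections). -/
theorem stmt4 (k ℓ : ℕ) (h1 : 1 < ℓ) (h2 : ℓ < k) :
    (∃ f : Fin k → Fin ℓ,
      ∀ t : Fin k → Fin k, Function.Bijective t → Function.Surjective (f ∘ t)) ∧
    (∀ x y : Fin k, x ≠ y → ∃ f : Fin k → Fin ℓ,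
      (∀ t : Fin k → Fin k, Function.Bijective t → Function.Surjective (f ∘ t)) ∧ f x ≠ f y) ∧
    (∀ t : Fin k → Fin k, ¬ Function.Bijective t → ∃ f : Fin k → Fin ℓ,
      (∀ t' : Fin k → Fin k, Function.Bijective t' → Function.Surjective (f ∘ t')) ∧
        ¬ Function.Surjective (f ∘ t)) := by
  have hℓ0 : 0 < ℓ := by omega
  have hk0 : 0 < k := by omega
  -- a surjection from f surjective and t bijective
  have key : ∀ f : Fin k → Fin ℓ, Function.Surjective f →
      ∀ t : Fin k → Fin k, Function.Bijective t → Function.Surjective (f ∘ t) := by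
    intro f hf t ht
    exact hf.comp ht.surjective
  -- basic surjection g
  set g : Fin k → Fin ℓ := fun w => ⟨w.val % ℓ, Nat.mod_lt _ hℓ0⟩ with hg
  have hgsurj : Function.Surjective g := by
    intro b
    refine ⟨⟨b.val, lt_trans b.isLt h2⟩, ?_⟩
    simp [hg, Nat.mod_eq_of_lt b.isLt]
  refine ⟨⟨g, key g hgsurj⟩, ?_, ?_⟩
  · -- SEP2
    intro x y hxy
    have h01 : (⟨0, hk0⟩ : Fin k) ≠ ⟨1, by omega⟩ := by
      simp [Fin.ext_iff]
    set σ1 : Equiv.Perm (Fin k) := Equiv.swap x ⟨0, hk0⟩ with hσ1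
    have hy' : σ1 y ≠ ⟨0, hk0⟩ := by
      intro h
      have : σ1 y = σ1 x := by rw [h, hσ1, Equiv.swap_apply_left]
      exact hxy (σ1.injective this).symm
    set σ2 : Equiv.Perm (Fin k) := Equiv.swap (σ1 y) ⟨1, by omega⟩ with hσ2
    set f : Fin k → Fin ℓ := fun w => g (σ2 (σ1 w)) with hf
    have hfsurj : Function.Surjective f := by
      intro b
      obtain ⟨a, ha⟩ := hgsurj b
      exact ⟨σ1.symm (σ2.symm a), by simp [hf, ha]⟩
    refine ⟨f, key f hfsurj, ?_⟩
    have hfx : σ2 (σ1 x) = ⟨0, hk0⟩ := by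
      rw [hσ1, Equiv.swap_apply_left, hσ2,
        Equiv.swap_apply_of_ne_of_ne (Ne.symm hy') h01]
    have hfy : σ2 (σ1 y) = ⟨1, by omega⟩ := by
      rw [hσ2, Equiv.swap_apply_left]
    simp only [hf, hfx, hfy, hg]
    simp [Fin.ext_iff, Nat.mod_eq_of_lt (show (1:ℕ) < ℓ from h1)]
  · -- SEP3
    intro t ht
    have htsurj : ¬ Function.Surjective t := fun hs =>
      ht (Finite.surjective_iff_bijective.mp hs)
    unfold Function.Surjective at htsurj
    push_neg at htsurj
    obtain ⟨z, hz⟩ := htsurj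
    set top : Fin k := ⟨k - 1, by omega⟩ with htop
    set σ : Equiv.Perm (Fin k) := Equiv.swap z top with hσ
    have hℓ1 : 0 < ℓ - 1 := by omega
    set f : Fin k → Fin ℓ := fun w =>
      if σ w = top then ⟨0, hℓ0⟩
      else ⟨(σ w).val % (ℓ - 1) + 1, by
        have := Nat.mod_lt (σ w).val hℓ1; omega⟩ with hf
    have hfsurj : Function.Surjective f := by
      intro b
      by_cases hb : b.val = 0
      · refine ⟨z, ?_⟩
        have : σ z = top := by rw [hσ, Equiv.swap_apply_left]
        simp [hf, this, Fin.ext_iff, hb]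
      · have hblt : b.val - 1 < k := by omega
        refine ⟨σ ⟨b.val - 1, hblt⟩, ?_⟩
        have hσσ : σ (σ ⟨b.val - 1, hblt⟩) = ⟨b.val - 1, hblt⟩ :=
          Equiv.swap_apply_self _ _ _
        have hune : (⟨b.val - 1, hblt⟩ : Fin k) ≠ top := by
          intro h
          have h' : b.val - 1 = k - 1 := congrArg Fin.val h
          omega
        rw [hf]
        simp only [hσσ, if_neg hune]
        have hmod : (b.val - 1) % (ℓ - 1) = b.val - 1 :=
          Nat.mod_eq_of_lt (by omega)
        rw [Fin.ext_iff]
        simp only [hmod]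
        omega
    refine ⟨f, key f hfsurj, ?_⟩
    intro hs
    obtain ⟨a, ha⟩ := hs ⟨0, hℓ0⟩
    simp only [Function.comp, hf] at ha
    by_cases hcase : σ (t a) = top
    · have : σ (t a) = σ z := by rw [hcase, hσ, Equiv.swap_apply_left]
      exact hz a (σ.injective this)
    · rw [if_neg hcase] at ha
      have := congrArg Fin.val ha
      simp at this
end

section
/- Let H = ⟨H; r⟩ be a finite loop-free k-hypergraph structure (so no constant tuple (a,...,a) lies in r) containing a hyperedge of cardinality 2, i.e., there exist distinct 0,1 ∈ H with every k-tuple from {0,1} hitting both values lying in r. If k > 2, then for every prime p > |H|, H has no cyclic polymorphism of arity p. -/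
/-- a finite loop-free k-hypergraph structure (with `k > 2`)
containing a hyperedge of cardinality 2 has no cyclic polymorphism of any
prime arity `p > |H|`. -/
theorem stmt9 {H : Type} [Fintype H] (k : ℕ) (hk : 2 < k) (r : Set (Fin k → H))
    (hset : ∀ t ∈ r, ∀ t' : Fin k → H, Set.range t' = Set.range t → t' ∈ r)
    (hloopfree : ∀ a : H, (fun _ : Fin k => a) ∉ r)
    (x y : H) (hxy : x ≠ y)
    (hedge : ∀ t : Fin k → H, Set.range t = {x, y} → t ∈ r)
    (p : ℕ) (hp : p.Prime) (hpH : Fintype.card H < p) :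
    ¬ ∃ f : (ZMod p → H) → H,
      (∀ t : ZMod p → Fin k → H, (∀ m, t m ∈ r) → (fun j => f fun m => t m j) ∈ r) ∧
      (∀ v : ZMod p → H, f v = f fun i => v (i + 1)) := by
  rintro ⟨f, hpoly, hcyc⟩
  have hH2 : 1 < Fintype.card H := Fintype.one_lt_card_iff_nontrivial.mpr ⟨⟨x, y, hxy⟩⟩
  have hpodd : p % 2 = 1 := hp.eq_two_or_odd.resolve_left (by omega)
  have hp3 : 3 ≤ p := by have := hp.two_le; omega
  haveI : NeZero p := ⟨by omega⟩
  set c : ZMod p → H := fun i => if i.val % 2 = 0 then x else y with hc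
  -- iterated cyclicity
  have hshift : ∀ (n : ℕ) (v : ZMod p → H), f (fun m => v (m + (n : ZMod p))) = f v := by
    intro n
    induction n with
    | zero => intro v; simp
    | succ n ih =>
      intro v
      have h1 := hcyc (fun i => v (i + (n : ZMod p)))
      have h2 : (fun m : ZMod p => v (m + ((n + 1 : ℕ) : ZMod p)))
          = fun i : ZMod p => v (i + 1 + (n : ZMod p)) := by
        funext m; congr 1; push_cast; ring
      rw [h2, ← h1, ih v]
  have hcm : ∀ m : ZMod p, c m = x ∨ c m = y := by
    intro m; by_cases h : m.val % 2 = 0 <;> simp [hc, h]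
  have hcne : ∀ a b : ZMod p, a.val % 2 ≠ b.val % 2 → c a ≠ c b := by
    intro a b hab
    by_cases h1 : a.val % 2 = 0 <;> by_cases h2 : b.val % 2 = 0 <;>
      simp [hc, h1, h2, hxy, hxy.symm] <;> omega
  haveI : Fact (1 < p) := ⟨by omega⟩
  have hval1 : ∀ m : ZMod p, (m + 1).val = (m.val + 1) % p := by
    intro m; rw [ZMod.val_add, ZMod.val_one]
  have hval2 : ∀ m : ZMod p, (m + 2).val = (m.val + 2) % p := by
    intro m
    have h2 : ((2 : ZMod p)).val = 2 := by
      have : ((2 : ℕ) : ZMod p).val = 2 % p := ZMod.val_natCast p 2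
      simpa [Nat.mod_eq_of_lt (show 2 < p by omega)] using this
    rw [ZMod.val_add, h2]
  have hkey : ∀ m : ZMod p, c m ≠ c (m + 1) ∨ c (m + 1) ≠ c (m + 2) := by
    intro m
    have ha : m.val < p := ZMod.val_lt m
    by_cases h : m.val + 2 < p
    · left
      apply hcne
      have e : (m.val + 1) % p = m.val + 1 := Nat.mod_eq_of_lt (by omega)
      rw [hval1 m, e]
      omega
    · rcases (show m.val = p - 2 ∨ m.val = p - 1 by omega) with h' | h'
      · left
        apply hcne
        have e : (m.val + 1) % p = m.val + 1 := Nat.mod_eq_of_lt (by omega)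
        rw [hval1 m, e]
        omega
      · right
        apply hcne
        have e1 : (m.val + 1) % p = 0 := by
          rw [h', show p - 1 + 1 = p by omega, Nat.mod_self]
        have e2 : (m.val + 2) % p = 1 := by
          rw [h', show p - 1 + 2 = p + 1 by omega, Nat.add_mod_left]
          exact Nat.mod_eq_of_lt (by omega)
        rw [hval1 m, hval2 m, e1, e2]
        omega
  -- the matrix
  have hcol : ∀ m : ZMod p, (fun j : Fin k => c (m + ((j : ℕ) : ZMod p))) ∈ r := by
    intro m
    apply hedge
    apply Set.eq_of_subset_of_subset
    · rintro z ⟨j, rfl⟩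
      rcases hcm (m + ((j : ℕ) : ZMod p)) with h | h <;> simp [h]
    · have h0 : (fun j : Fin k => c (m + ((j : ℕ) : ZMod p))) ⟨0, by omega⟩ = c m := by
        simp
      have h1 : (fun j : Fin k => c (m + ((j : ℕ) : ZMod p))) ⟨1, by omega⟩ = c (m + 1) := by
        simp
      have h2 : (fun j : Fin k => c (m + ((j : ℕ) : ZMod p))) ⟨2, by omega⟩ = c (m + 2) := by
        norm_num
      have hboth : ∃ a b : Fin k,
          (fun j : Fin k => c (m + ((j : ℕ) : ZMod p))) a = x ∧
          (fun j : Fin k => c (m + ((j : ℕ) : ZMod p))) b = y := by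
        rcases hkey m with hne | hne
        · rcases hcm m with hx0 | hy0
          · rcases hcm (m + 1) with hx1 | hy1
            · exact absurd (hx0.trans hx1.symm) hne
            · exact ⟨⟨0, by omega⟩, ⟨1, by omega⟩, by rw [h0, hx0], by rw [h1, hy1]⟩
          · rcases hcm (m + 1) with hx1 | hy1
            · exact ⟨⟨1, by omega⟩, ⟨0, by omega⟩, by rw [h1, hx1], by rw [h0, hy0]⟩
            · exact absurd (hy0.trans hy1.symm) hne
        · rcases hcm (m + 1) with hx0 | hy0
          · rcases hcm (m + 2) with hx1 | hy1
            · exact absurd (hx0.trans hx1.symm) hne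
            · exact ⟨⟨1, by omega⟩, ⟨2, by omega⟩, by rw [h1, hx0], by rw [h2, hy1]⟩
          · rcases hcm (m + 2) with hx1 | hy1
            · exact ⟨⟨2, by omega⟩, ⟨1, by omega⟩, by rw [h2, hx1], by rw [h1, hy0]⟩
            · exact absurd (hy0.trans hy1.symm) hne
      rintro z (rfl | rfl)
      · obtain ⟨a, b, hax, hby⟩ := hboth
        exact ⟨a, hax⟩
      · obtain ⟨a, b, hax, hby⟩ := hboth
        exact ⟨b, hby⟩
  have hmem := hpoly (fun m j => c (m + ((j : ℕ) : ZMod p))) hcol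
  have heq : (fun j : Fin k => f fun m => c (m + ((j : ℕ) : ZMod p))) = fun _ : Fin k => f c := by
    funext j
    exact hshift (j : ℕ) c
  rw [heq] at hmem
  exact hloopfree (f c) hmem
end

section
/- Let H be a loop-free k-hypergraph structure with k > 2 whose minimal hyperedge cardinality d satisfies d > 2. Define the binary relation x_1 ∼ x_2 by ∃x_3...∃x_d (x_1,x_2,x_3,...,x_{d−1},x_d,...,x_d) ∈ r (with x_d repeated k−d+1 times). Then ∼ is exactly the symmetric relation consisting of all pairs of distinct vertices lying in a common hyperedge of cardinality d; equivalently, the graph ⟨H; ∼⟩ is the union of d-cliques on the hyperedges of cardinality d. -/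
/-- Auxiliary lemma: the range of the extended `k`-tuple equals the range of `yv`. -/
lemma stmt11_range_aux {H : Type} (k d : ℕ) (hd : 0 < d) (hdk : d ≤ k) (yv : Fin d → H) :
    Set.range (fun i : Fin k => if h : (i : ℕ) < d then yv ⟨i, h⟩ else yv ⟨d - 1, by omega⟩)
      = Set.range yv := by
  apply Set.Subset.antisymm
  · rintro x ⟨i, rfl⟩
    by_cases h : (i : ℕ) < d
    · exact ⟨⟨i, h⟩, by simp [h]⟩
    · exact ⟨⟨d - 1, by omega⟩, by simp [h]⟩
  · rintro x ⟨j, rfl⟩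
    refine ⟨⟨(j : ℕ), by omega⟩, ?_⟩
    simp [j.isLt]

set_option maxHeartbeats 1000000

/-- for a loop-free k-hypergraph structure (k > 2) whose
hyperedge set `E` has minimal hyperedge cardinality `d > 2`, the binary
relation `x₁ ∼ x₂` defined by
`∃ x₃ … x_d, (x₁,x₂,x₃,…,x_{d−1},x_d,…,x_d) ∈ r`
consists exactly of the pairs of distinct vertices lying in a common
hyperedge of cardinality `d`. -/
theorem stmt11 {H : Type} (k d : ℕ) (hk : 2 < k) (hd2 : 2 < d) (hdk : d ≤ k)
    (E : Set (Set H)) (r : Set (Fin k → H))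
    (hrE : ∀ t : Fin k → H, t ∈ r ↔ Set.range t ∈ E)
    (hcard : ∀ e ∈ E, e.Finite ∧ d ≤ e.ncard ∧ e.ncard ≤ k)
    (hmin : ∃ e ∈ E, e.ncard = d) :
    ∀ x₁ x₂ : H,
      ((∃ yv : Fin d → H, yv ⟨0, by omega⟩ = x₁ ∧ yv ⟨1, by omega⟩ = x₂ ∧
        (fun i : Fin k => if h : (i : ℕ) < d then yv ⟨i, h⟩ else yv ⟨d - 1, by omega⟩) ∈ r)
      ↔ (x₁ ≠ x₂ ∧ ∃ e ∈ E, e.ncard = d ∧ x₁ ∈ e ∧ x₂ ∈ e)) := by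
  classical
  intro x₁ x₂
  constructor
  · rintro ⟨yv, h0, h1, hr⟩
    have hrange := stmt11_range_aux k d (by omega) hdk yv
    have hE : Set.range yv ∈ E := by
      have := (hrE _).1 hr
      rwa [hrange] at this
    obtain ⟨hfin, hdle, -⟩ := hcard _ hE
    have hrfin : Set.range yv = ↑(Finset.univ.image yv) := by simp
    have hle : (Set.range yv).ncard ≤ d := by
      rw [hrfin, Set.ncard_coe_finset]
      calc (Finset.univ.image yv).card ≤ Finset.univ.card := Finset.card_image_le
        _ = d := by simp
    have hceq : (Finset.univ.image yv).card = (Finset.univ : Finset (Fin d)).card := by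
      have : (Set.range yv).ncard = d := le_antisymm hle hdle
      rw [hrfin, Set.ncard_coe_finset] at this
      simpa using this
    have hinj : Set.InjOn yv ↑(Finset.univ : Finset (Fin d)) :=
      Finset.card_image_iff.mp hceq
    have hne : x₁ ≠ x₂ := by
      rw [← h0, ← h1]
      intro h
      have := hinj (by simp) (by simp) h
      have : (0 : ℕ) = 1 := congrArg Fin.val this
      omega
    exact ⟨hne, Set.range yv, hE, le_antisymm hle hdle,
      h0 ▸ ⟨_, rfl⟩, h1 ▸ ⟨_, rfl⟩⟩
  · rintro ⟨hne, e, heE, hecard, hx1, hx2⟩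
    have hfin := (hcard e heE).1
    haveI : Fintype e := hfin.fintype
    have hcardFin : Fintype.card e = d := by
      rw [← hecard, Set.ncard_eq_toFinset_card']
      simp
    let g : Fin d ≃ e := (Fintype.equivFinOfCardEq hcardFin).symm
    set zero : Fin d := ⟨0, by omega⟩ with hzero
    set one : Fin d := ⟨1, by omega⟩ with hone
    set a : Fin d := g.symm ⟨x₁, hx1⟩ with ha
    set b : Fin d := g.symm ⟨x₂, hx2⟩ with hb
    have hab : a ≠ b := by
      intro h
      apply hne
      have := congrArg (fun i => (g i : H)) h
      simpa [ha, hb] using this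
    set τ : Equiv.Perm (Fin d) := Equiv.swap zero a with hτ
    set c : Fin d := τ.symm b with hc
    have hc0 : c ≠ zero := by
      intro h
      apply hab
      have : b = τ zero := by rw [← h, hc]; simp
      rw [this, hτ, Equiv.swap_apply_left]
    have h01 : zero ≠ one := by
      intro h
      have : (0 : ℕ) = 1 := congrArg Fin.val h
      omega
    set σ : Equiv.Perm (Fin d) := (Equiv.swap one c).trans τ with hσ
    refine ⟨fun i => ((g (σ i)) : H), ?_, ?_, ?_⟩
    · show ((g (σ zero)) : H) = x₁
      have : σ zero = a := by
        rw [hσ]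
        simp only [Equiv.trans_apply]
        rw [Equiv.swap_apply_of_ne_of_ne h01 hc0.symm, hτ, Equiv.swap_apply_left]
      rw [this, ha]
      simp
    · show ((g (σ one)) : H) = x₂
      have : σ one = b := by
        rw [hσ]
        simp only [Equiv.trans_apply]
        rw [Equiv.swap_apply_left, hc]
        simp
      rw [this, hb]
      simp
    · rw [hrE]
      beta_reduce
      have key := stmt11_range_aux k d (by omega) hdk (fun j => ((g (σ j)) : H))
      beta_reduce at key
      rw [key]
      have : Set.range (fun i => ((g (σ i)) : H))
          = Subtype.val '' Set.range (fun i => g (σ i)) := by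
        rw [← Set.range_comp]; rfl
      rw [this]
      have hsurj : Set.range (fun i => g (σ i)) = Set.univ := by
        apply Set.eq_univ_of_forall
        intro y
        exact ⟨σ.symm (g.symm y), by simp⟩
      rw [hsurj, Set.image_univ, Subtype.range_coe]
      exact heE
end

section
/- Let M be a finite relational structure and S a finite structure of the same signature satisfying the separation conditions (SEP1)–(SEP3) with respect to M. Then S is isomorphic to an induced substructure of M^{hom(S,M)}, the direct power of M indexed by the (finite) set of homomorphisms from S to M. -/
/-- if a finite structure `S` satisfies (SEP1)–(SEP3) with
respect to a finite structure `M` of the same signature, then the natural map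
`s ↦ (φ s)_{φ ∈ hom(S,M)}` is an embedding of `S` as an induced substructure
of the direct power `M^{hom(S,M)}`. -/
theorem stmt12 {S M : Type} [Fintype S] [Fintype M] {ι : Type} (ar : ι → ℕ)
    (RS : ∀ i : ι, Set (Fin (ar i) → S)) (RM : ∀ i : ι, Set (Fin (ar i) → M))
    (IsHom : (S → M) → Prop)
    (hIsHom : ∀ g : S → M, IsHom g ↔ ∀ (i : ι), ∀ t ∈ RS i, (g ∘ t) ∈ RM i)
    (sep1 : ∃ g : S → M, IsHom g)
    (sep2 : ∀ x y : S, x ≠ y → ∃ g : S → M, IsHom g ∧ g x ≠ g y)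
    (sep3 : ∀ (i : ι), ∀ t : Fin (ar i) → S, t ∉ RS i →
      ∃ g : S → M, IsHom g ∧ (g ∘ t) ∉ RM i) :
    Function.Injective (fun (s : S) (φ : {g : S → M // IsHom g}) => φ.1 s) ∧
    ∀ (i : ι) (t : Fin (ar i) → S),
      t ∈ RS i ↔ ∀ φ : {g : S → M // IsHom g}, (fun j => φ.1 (t j)) ∈ RM i := by
  constructor
  · intro x y hxy
    by_contra hne
    obtain ⟨g, hg, hgxy⟩ := sep2 x y hne
    exact hgxy (congrFun hxy ⟨g, hg⟩)
  · intro i t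
    constructor
    · intro ht φ
      exact (hIsHom φ.1).mp φ.2 i t ht
    · intro h
      by_contra ht
      obtain ⟨g, hg, hgt⟩ := sep3 i t ht
      exact hgt (h ⟨g, hg⟩)
end

section
/- For a finite relational structure M, a structure S of the same signature belongs to the class SP(M) (isomorphic copies of substructures of direct powers of M over nonempty index sets) if and only if S satisfies the separation conditions (SEP1)–(SEP3) with respect to M. -/
/-- a structure `S` lies in `SP(M)` (isomorphic to an induced
substructure of a direct power of `M` over a nonempty index set), for `M` a
finite structure of the same relational signature, if and only if the
separation conditions (SEP1)–(SEP3) hold. -/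
theorem stmt13 {S M : Type} [Fintype M] {ι : Type} (ar : ι → ℕ)
    (RS : ∀ i : ι, Set (Fin (ar i) → S)) (RM : ∀ i : ι, Set (Fin (ar i) → M)) :
    (∃ (I : Type) (_ : Nonempty I) (g : S → I → M), Function.Injective g ∧
      ∀ (i : ι) (t : Fin (ar i) → S),
        t ∈ RS i ↔ ∀ w : I, (fun j => g (t j) w) ∈ RM i) ↔
    ((∃ g : S → M, ∀ (i : ι), ∀ t ∈ RS i, (g ∘ t) ∈ RM i) ∧
     (∀ x y : S, x ≠ y → ∃ g : S → M,
        (∀ (i : ι), ∀ t ∈ RS i, (g ∘ t) ∈ RM i) ∧ g x ≠ g y) ∧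
     (∀ (i : ι), ∀ t : Fin (ar i) → S, t ∉ RS i → ∃ g : S → M,
        (∀ (i' : ι), ∀ t' ∈ RS i', (g ∘ t') ∈ RM i') ∧ (g ∘ t) ∉ RM i)) := by
  constructor
  · rintro ⟨I, ⟨w₀⟩, g, hinj, hrel⟩
    refine ⟨⟨fun s => g s w₀, fun i t ht => (hrel i t).1 ht w₀⟩, ?_, ?_⟩
    · intro x y hxy
      have : g x ≠ g y := fun h => hxy (hinj h)
      obtain ⟨w, hw⟩ := Function.ne_iff.1 this
      exact ⟨fun s => g s w, fun i t ht => (hrel i t).1 ht w, hw⟩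
    · intro i t hti
      have : ¬ ∀ w : I, (fun j => g (t j) w) ∈ RM i := fun h => hti ((hrel i t).2 h)
      push_neg at this
      obtain ⟨w, hw⟩ := this
      exact ⟨fun s => g s w, fun i' t' ht' => (hrel i' t').1 ht' w, hw⟩
  · rintro ⟨⟨g₀, hg₀⟩, sep2, sep3⟩
    refine ⟨{g : S → M // ∀ i, ∀ t ∈ RS i, (g ∘ t) ∈ RM i}, ⟨⟨g₀, hg₀⟩⟩,
      fun s h => h.1 s, ?_, ?_⟩
    · intro x y hxy
      by_contra hne
      obtain ⟨g, hg, hgxy⟩ := sep2 x y hne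
      exact hgxy (congrFun hxy ⟨g, hg⟩)
    · intro i t
      constructor
      · intro ht w
        exact w.2 i t ht
      · intro h
        by_contra hti
        obtain ⟨g, hg, hgt⟩ := sep3 i t hti
        exact hgt (h ⟨g, hg⟩)
end

section
/- Let s_0,...,s_{p−1} ∈ {0,1} be a cyclic sequence with no k consecutive equal values (cyclically), let H = ⟨H; r⟩ be a loop-free k-hypergraph structure in which {0,1} is a hyperedge (so all non-constant k-tuples from {0,1} lie in r), and let f: H^p → H be a cyclic p-ary polymorphism. Then the constant k-tuple (a,...,a) with a = f(s_0,...,s_{p−1}) lies in r, contradicting loop-freeness; hence no such f exists for this H. -/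
/-- given a cyclic binary sequence of length `p` with no run of
`k` consecutive equal values, a loop-free k-hypergraph structure `⟨H; r⟩` in
which `{x, y}` is a hyperedge (all non-constant k-tuples over `{x,y}` lie in
`r`), there is no cyclic p-ary polymorphism of `⟨H; r⟩`: assuming one exists
yields a contradiction with loop-freeness. -/
theorem stmt17 {H : Type} (k p : ℕ) (hk : 2 < k)
    (s : ZMod p → Bool)
    (hrun : ∀ i : ZMod p, ∃ a b : Fin k, s (i + (a : ℕ)) ≠ s (i + (b : ℕ)))
    (r : Set (Fin k → H))
    (hset : ∀ t ∈ r, ∀ t' : Fin k → H, Set.range t' = Set.range t → t' ∈ r)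
    (hloopfree : ∀ a : H, (fun _ : Fin k => a) ∉ r)
    (x y : H) (hxy : x ≠ y)
    (hedge : ∀ t : Fin k → H, (∀ j, t j = x ∨ t j = y) →
      (∃ j j', t j ≠ t j') → t ∈ r)
    (f : (ZMod p → H) → H)
    (hpoly : ∀ t : ZMod p → Fin k → H,
      (∀ m, t m ∈ r) → (fun j => f fun m => t m j) ∈ r)
    (hcyc : ∀ v : ZMod p → H, f v = f fun i => v (i + 1)) :
    False := by
  set v : ZMod p → H := fun m => if s m then x else y with hv
  have hshift : ∀ n : ℕ, f (fun m => v (m + (n : ZMod p))) = f v := by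
    intro n
    induction n with
    | zero => simp
    | succ n ih =>
      have h1 : f (fun m => v (m + (n : ZMod p))) =
          f (fun m => v (m + 1 + (n : ZMod p))) :=
        hcyc (fun m => v (m + (n : ZMod p)))
      have h2 : (fun m : ZMod p => v (m + ((n + 1 : ℕ) : ZMod p))) =
          fun m => v (m + 1 + (n : ZMod p)) := by
        funext m
        push_cast
        ring_nf
      rw [h2, ← h1, ih]
  -- each column is a non-constant tuple over {x,y}, hence in r
  have hcol : ∀ m : ZMod p, (fun j : Fin k => v (m + (j : ℕ))) ∈ r := by
    intro m
    apply hedge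
    · intro j
      by_cases h : s (m + ((j : ℕ) : ZMod p)) <;> simp [hv, h]
    · obtain ⟨a, b, hab⟩ := hrun m
      refine ⟨a, b, ?_⟩
      simp only [hv]
      cases ha : s (m + ((a : ℕ) : ZMod p)) <;>
        cases hb : s (m + ((b : ℕ) : ZMod p)) <;>
        rw [ha, hb] at hab <;> simp only [if_pos rfl, if_neg Bool.false_ne_true] <;>
        first
          | exact absurd rfl hab
          | exact hxy
          | exact hxy.symm
  have := hpoly (fun m j => v (m + (j : ℕ))) hcol
  have heq : (fun j : Fin k => f fun m => v (m + ((j : ℕ) : ZMod p))) =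
      fun _ : Fin k => f v := by
    funext j
    exact hshift (j : ℕ)
  rw [heq] at this
  exact hloopfree (f v) this
end
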